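/- arXiv:0805.0629 — 2 statements merged into one kernel-verified Lean document; each statement's English description precedes it below -/
import Mathlib

section
/- Let M be an equilateral convex polygon with vertices V₁,…,Vₙ (n > 3), no four vertices concyclic. Then any two neighboring vertices of M lie on a circle empty of other vertices of M, and consequently at least four of the circles Cᵢ through consecutive triples of vertices are extremal (empty or full). -/
noncomputable def planeDet (u v : ℂ) : ℝ := u.re * v.im - u.im * v.re

def IsConvexPolygon {n : ℕ} (V : ZMod n → ℂ) : Prop :=
  ∀ i j : ZMod n, j ≠ i → j ≠ i + 1 → 0 < planeDet (V (i + 1) - V i) (V j - V i)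

def NoFourConcyclic {n : ℕ} [NeZero n] (V : ZMod n → ℂ) : Prop :=
  ∀ (O : ℂ) (r : ℝ), Set.ncard {i : ZMod n | dist O (V i) = r} ≤ 3

/-- The circle through `V (i-1), V i, V (i+1)` is empty: all other vertices strictly
outside. -/
def EmptyNbrCircle {n : ℕ} (V : ZMod n → ℂ) (i : ZMod n) : Prop :=
  ∃ (O : ℂ) (r : ℝ), dist O (V (i - 1)) = r ∧ dist O (V i) = r ∧ dist O (V (i + 1)) = r ∧
    ∀ j : ZMod n, j ≠ i - 1 → j ≠ i → j ≠ i + 1 → r < dist O (V j)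

/-- The circle through `V (i-1), V i, V (i+1)` is full: all other vertices strictly inside. -/
def FullNbrCircle {n : ℕ} (V : ZMod n → ℂ) (i : ZMod n) : Prop :=
  ∃ (O : ℂ) (r : ℝ), dist O (V (i - 1)) = r ∧ dist O (V i) = r ∧ dist O (V (i + 1)) = r ∧
    ∀ j : ZMod n, j ≠ i - 1 → j ≠ i → j ≠ i + 1 → dist O (V j) < r

set_option linter.unusedSectionVars false
set_option maxHeartbeats 1600000

namespace Sedykh

lemma det_trans (f u v w : ℂ) (hfu : 0 < planeDet f u) (hfv : 0 < planeDet f v)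
    (hfw : 0 < planeDet f w) (huv : 0 < planeDet u v) (hvw : 0 < planeDet v w) :
    0 < planeDet u w := by
  have key : planeDet u w * planeDet f v =
      planeDet u v * planeDet f w + planeDet v w * planeDet f u := by
    simp only [planeDet]; ring
  nlinarith [mul_pos huv hfw, mul_pos hvw hfu]

lemma planeDet_zero_left (v : ℂ) : planeDet 0 v = 0 := by simp [planeDet]

variable {n : ℕ} [NeZero n]

lemma zmod_nz {k : ℕ} (h0 : 0 < k) (hk : k < n) : (k : ZMod n) ≠ 0 := by
  intro h
  have hd := (ZMod.natCast_eq_zero_iff k n).mp h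
  have := Nat.le_of_dvd h0 hd
  omega

lemma zmod_cast_inj {a b : ℕ} (ha : a < n) (hb : b < n) (h : (a : ZMod n) = b) : a = b := by
  have := congrArg ZMod.val h
  rwa [ZMod.val_cast_of_lt ha, ZMod.val_cast_of_lt hb] at this

lemma zmod_exists (p j : ZMod n) : ∃ e : ℕ, e < n ∧ j = p + e := by
  refine ⟨(j - p).val, ZMod.val_lt _, ?_⟩
  rw [ZMod.natCast_val, ZMod.cast_id]
  ring

noncomputable def ctr (V : ZMod n → ℂ) (a b : ZMod n) (u : ℝ) : ℂ :=
  ((1/2 : ℝ) : ℂ) * (V a + V b) + (u : ℂ) * Complex.I * (V b - V a)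

noncomputable def FF (V : ZMod n → ℂ) (a b j : ZMod n) (u : ℝ) : ℝ :=
  Complex.normSq (V j - ctr V a b u) - Complex.normSq (V a - ctr V a b u)

noncomputable def DD (V : ZMod n → ℂ) (a b j : ZMod n) : ℝ := planeDet (V b - V a) (V j - V a)

noncomputable def tq (V : ZMod n → ℂ) (a b j : ZMod n) : ℝ := FF V a b j 0 / (2 * DD V a b j)

lemma FF_affine (V : ZMod n → ℂ) (a b j : ZMod n) (u : ℝ) :
    FF V a b j u = FF V a b j 0 - 2*u*DD V a b j := by
  simp only [FF, ctr, DD, planeDet, Complex.normSq_apply, Complex.add_re, Complex.add_im,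
    Complex.sub_re, Complex.sub_im, Complex.mul_re, Complex.mul_im, Complex.I_re, Complex.I_im,
    Complex.ofReal_re, Complex.ofReal_im]
  ring

lemma FF_base (V : ZMod n → ℂ) (a b : ZMod n) (u : ℝ) : FF V a b b u = 0 := by
  simp only [FF, ctr, Complex.normSq_apply, Complex.add_re, Complex.add_im,
    Complex.sub_re, Complex.sub_im, Complex.mul_re, Complex.mul_im, Complex.I_re, Complex.I_im,
    Complex.ofReal_re, Complex.ofReal_im]
  ring

lemma FF_self (V : ZMod n → ℂ) (a b : ZMod n) (u : ℝ) : FF V a b a u = 0 := by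
  simp [FF]

lemma FF_t (V : ZMod n → ℂ) (a b j : ZMod n) (u : ℝ) (hD : DD V a b j ≠ 0) :
    FF V a b j u = 2 * DD V a b j * (tq V a b j - u) := by
  rw [FF_affine]
  rw [tq, mul_sub, mul_div_cancel₀ _ (mul_ne_zero two_ne_zero hD)]
  ring

lemma dist_sq (O z : ℂ) : dist O z ^ 2 = Complex.normSq (z - O) := by
  rw [dist_comm, Complex.dist_eq, Complex.sq_norm]

lemma FF_dist (V : ZMod n → ℂ) (a b j : ZMod n) (u : ℝ) :
    FF V a b j u = dist (ctr V a b u) (V j) ^ 2 - dist (ctr V a b u) (V a) ^ 2 := by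
  rw [FF, dist_sq, dist_sq]

lemma dist_eq_of_FF (V : ZMod n → ℂ) (a b j : ZMod n) (u : ℝ) (h : FF V a b j u = 0) :
    dist (ctr V a b u) (V j) = dist (ctr V a b u) (V a) := by
  have h2 := FF_dist V a b j u
  rw [h] at h2
  have d1 := dist_nonneg (x := ctr V a b u) (y := V j)
  have d2 := dist_nonneg (x := ctr V a b u) (y := V a)
  nlinarith [sq_nonneg (dist (ctr V a b u) (V j) - dist (ctr V a b u) (V a))]

lemma conv_s (s : ℝ) (hs : s = 1 ∨ s = -1) (V : ZMod n → ℂ) (a b j : ZMod n) (u : ℝ)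
    (h : 0 < s * FF V a b j u) :
    0 < s * (dist (ctr V a b u) (V j) - dist (ctr V a b u) (V a)) := by
  have h2 := FF_dist V a b j u
  have d1 := dist_nonneg (x := ctr V a b u) (y := V j)
  have d2 := dist_nonneg (x := ctr V a b u) (y := V a)
  rcases hs with rfl | rfl <;> nlinarith

lemma exists_param (V : ZMod n → ℂ) (a b : ZMod n) (hab : V a ≠ V b) (O : ℂ)
    (h : dist O (V a) = dist O (V b)) : ∃ u : ℝ, ctr V a b u = O := by
  set e : ℂ := V b - V a with he
  have hne : Complex.normSq e ≠ 0 := by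
    simpa [he, sub_eq_zero] using fun hh => hab (by linear_combination -hh)
  set w : ℂ := O - ((1/2 : ℝ) : ℂ) * (V a + V b) with hw
  have horth : w.re * e.re + w.im * e.im = 0 := by
    have h2 : dist O (V a) ^ 2 = dist O (V b) ^ 2 := by rw [h]
    rw [dist_sq, dist_sq] at h2
    simp only [Complex.normSq_apply, Complex.sub_re, Complex.sub_im] at h2
    simp only [hw, he, Complex.sub_re, Complex.sub_im, Complex.add_re, Complex.add_im,
      Complex.mul_re, Complex.mul_im, Complex.ofReal_re, Complex.ofReal_im]
    nlinarith [h2]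
  set u : ℝ := (e.re * w.im - e.im * w.re) / Complex.normSq e with hu
  have hns : Complex.normSq e = e.re^2 + e.im^2 := by
    simp [Complex.normSq_apply]; ring
  have hmain : ((u : ℝ) : ℂ) * Complex.I * e = w := by
    apply Complex.ext
    · simp only [Complex.mul_re, Complex.mul_im, Complex.I_re, Complex.I_im,
        Complex.ofReal_re, Complex.ofReal_im]
      rw [hu, hns]
      have hne' : e.re^2 + e.im^2 ≠ 0 := by rw [← hns]; exact hne
      field_simp
      linear_combination (-e.re) * horth
    · simp only [Complex.mul_re, Complex.mul_im, Complex.I_re, Complex.I_im,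
        Complex.ofReal_re, Complex.ofReal_im]
      rw [hu, hns]
      have hne' : e.re^2 + e.im^2 ≠ 0 := by rw [← hns]; exact hne
      field_simp
      linear_combination (-e.im) * horth
  refine ⟨u, ?_⟩
  rw [ctr, ← he, hmain, hw]
  ring

variable (V : ZMod n → ℂ) (hn : 3 < n) (hconv : IsConvexPolygon V)

include hn hconv in
lemma phi_pos (p j : ZMod n) (hj : j ≠ p) :
    0 < planeDet (V (p+1) - V (p-1)) (V j - V p) := by
  have h2 : ((2:ℕ) : ZMod n) ≠ 0 := zmod_nz (by norm_num) (by omega)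
  have h1 : ((1:ℕ) : ZMod n) ≠ 0 := zmod_nz (by norm_num) (by omega)
  push_cast at h2 h1
  have hbase : 0 < planeDet (V p - V (p-1)) (V (p+1) - V p) := by
    have := hconv (p-1) (p+1) (by intro h; apply h2; linear_combination h)
      (by intro h; apply h1; linear_combination h - (1:ZMod n))
    rw [sub_add_cancel] at this
    simp only [planeDet, Complex.sub_re, Complex.sub_im] at this ⊢
    linear_combination this
  by_cases hj1 : j = p + 1
  · subst hj1
    simp only [planeDet, Complex.sub_re, Complex.sub_im] at hbase ⊢
    linear_combination hbase
  by_cases hj2 : j = p - 1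
  · subst hj2
    simp only [planeDet, Complex.sub_re, Complex.sub_im] at hbase ⊢
    linear_combination hbase
  · have hA := hconv p j hj hj1
    have hB := hconv (p-1) j hj2 (by rwa [sub_add_cancel])
    rw [sub_add_cancel] at hB
    have hB' : 0 < planeDet (V p - V (p-1)) (V j - V p) := by
      simp only [planeDet, Complex.sub_re, Complex.sub_im] at hB ⊢
      linear_combination hB
    simp only [planeDet, Complex.sub_re, Complex.sub_im] at hA hB' ⊢
    linear_combination hA + hB'

include hn hconv in
lemma step_pos (p : ZMod n) (e : ℕ) (he : 0 < e) (hen : e + 1 < n) :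
    0 < planeDet (V (p+(e:ℕ)) - V p) (V (p+((e+1 : ℕ):ℕ)) - V p) := by
  have hne : p ≠ p + (e:ℕ) := by
    intro h
    exact zmod_nz (k := e) he (Nat.lt_of_succ_lt hen) (by linear_combination -h)
  have hne1 : p ≠ p + (e:ℕ) + 1 := by
    intro h
    have : ((e+1 : ℕ) : ZMod n) = 0 := by push_cast; linear_combination -h
    exact zmod_nz (k := e+1) (Nat.succ_pos e) hen this
  have h := hconv (p + (e:ℕ)) p hne hne1
  have hcast : (((e+1 : ℕ)):ZMod n) = (e:ZMod n) + 1 := by push_cast; ring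
  rw [hcast, ← add_assoc]
  simp only [planeDet, Complex.sub_re, Complex.sub_im] at h ⊢
  linear_combination h

include hn hconv in
lemma convpos (p : ZMod n) (e d : ℕ) (he : 0 < e) (hed : e < d) :
    d < n → 0 < planeDet (V (p+(e:ℕ)) - V p) (V (p+(d:ℕ)) - V p) := by
  induction d, hed using Nat.le_induction with
  | base => exact fun h => step_pos V hn hconv p e he h
  | succ d hd ih =>
    intro hdn
    have hphi : ∀ k : ℕ, 0 < k → k < n → 0 < planeDet (V (p+1) - V (p-1)) (V (p+(k:ℕ)) - V p) := by
      intro k hk hkn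
      apply phi_pos V hn hconv p
      intro h
      exact zmod_nz (k := k) hk hkn (by linear_combination h)
    exact det_trans _ _ (V (p + (d:ℕ)) - V p) _ (hphi e he (by omega)) (hphi d (by omega) (by omega))
      (hphi (d+1) (by omega) hdn) (ih (by omega)) (step_pos V hn hconv p d (by omega) hdn)

lemma planeDet_swap (x y : ℂ) : planeDet x y = - planeDet y x := by
  simp only [planeDet]; ring

include hn hconv in
lemma DD_interior (p : ZMod n) (e d : ℕ) (h0 : 0 < e) (hed : e < d) (hdn : d < n) :
    DD V p (p + (d:ℕ)) (p + (e:ℕ)) < 0 := by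
  have := convpos V hn hconv p e d h0 hed hdn
  rw [DD, planeDet_swap]
  linarith

include hn hconv in
lemma DD_exterior (p : ZMod n) (d e : ℕ) (h0 : 0 < d) (hed : d < e) (hen : e < n) :
    0 < DD V p (p + (d:ℕ)) (p + (e:ℕ)) :=
  convpos V hn hconv p d e h0 hed hen

lemma four (hgen : NoFourConcyclic V) (a b c e : ZMod n) (u : ℝ)
    (hab : a ≠ b) (hac : a ≠ c) (hae : a ≠ e) (hbc : b ≠ c) (hbe : b ≠ e) (hce : c ≠ e)
    (h1 : FF V a b c u = 0) (h2 : FF V a b e u = 0) : False := by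
  set O := ctr V a b u with hO
  set r := dist O (V a) with hr
  have hbr : dist O (V b) = r := dist_eq_of_FF V a b b u (FF_base V a b u)
  have hcr : dist O (V c) = r := dist_eq_of_FF V a b c u h1
  have her : dist O (V e) = r := dist_eq_of_FF V a b e u h2
  have hsub : ({a, b, c, e} : Set (ZMod n)) ⊆ {i : ZMod n | dist O (V i) = r} := by
    intro x hx
    simp only [Set.mem_insert_iff, Set.mem_singleton_iff] at hx
    rcases hx with rfl | rfl | rfl | rfl <;> simp only [Set.mem_setOf_eq] <;>
      first | exact hr.symm | exact hbr | exact hcr | exact her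
  have hcard : Set.ncard ({a, b, c, e} : Set (ZMod n)) = 4 := by
    rw [Set.ncard_insert_of_notMem (by simp [hab, hac, hae]) (Set.toFinite _),
      Set.ncard_insert_of_notMem (by simp [hbc, hbe]) (Set.toFinite _),
      Set.ncard_insert_of_notMem (by simp [hce]) (Set.toFinite _),
      Set.ncard_singleton]
  have hle := Set.ncard_le_ncard hsub (Set.toFinite _)
  have := hgen O r
  omega

include hn hconv in
lemma step (s : ℝ) (hs : s = 1 ∨ s = -1) (hgen : NoFourConcyclic V) (p : ZMod n) (d : ℕ)
    (hd2 : 2 ≤ d) (hdn : d < n) (u₀ : ℝ)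
    (h : ∀ j, j ≠ p → j ≠ p + (d:ℕ) → 0 < s * FF V p (p + (d:ℕ)) j u₀) :
    ∃ e : ℕ, 1 ≤ e ∧ e < d ∧ ∃ u : ℝ,
      FF V p (p + (d:ℕ)) (p + (e:ℕ)) u = 0 ∧
      ∀ j, j ≠ p → j ≠ p + (d:ℕ) → j ≠ p + (e:ℕ) → 0 < s * FF V p (p + (d:ℕ)) j u := by
  set q := p + (d:ℕ) with hq
  have hne_p : ∀ e : ℕ, 0 < e → e < n → p + (e:ℕ) ≠ p := fun e he hen hh =>
      zmod_nz (k := e) he hen (by linear_combination hh)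
  have hcast_ne : ∀ e f : ℕ, e < n → f < n → e ≠ f → p + (e:ℕ) ≠ p + (f:ℕ) := by
    intro e f hen hfn hef hh
    exact hef (zmod_cast_inj hen hfn (by linear_combination hh))
  have hDneg : ∀ e : ℕ, 1 ≤ e → e < d → DD V p q (p + (e:ℕ)) < 0 :=
    fun e h1 h2 => DD_interior V hn hconv p e d h1 h2 hdn
  have hint : ∀ e : ℕ, 1 ≤ e → e < d →
      s * tq V p q (p + (e:ℕ)) < s * u₀ := by
    intro e h1 h2
    have hD := hDneg e h1 h2
    have hg := h (p + (e:ℕ)) (hne_p e h1 (by omega))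
      (hcast_ne e d (by omega) hdn (by omega))
    rw [FF_t V p q _ u₀ (ne_of_lt hD)] at hg
    rcases hs with rfl | rfl <;> nlinarith
  let S : Finset ℕ := Finset.Ico 1 d
  have hSne : S.Nonempty := ⟨1, by simp only [S, Finset.mem_Ico]; omega⟩
  obtain ⟨e₀, he₀S, hmax⟩ := S.exists_max_image (fun e => s * tq V p q (p + (e:ℕ))) hSne
  obtain ⟨he₀1, he₀d⟩ := Finset.mem_Ico.mp he₀S
  set m := p + (e₀ : ℕ) with hm
  set u := tq V p q m with hu
  have hD₀ := hDneg e₀ he₀1 he₀d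
  refine ⟨e₀, he₀1, he₀d, u, ?_, ?_⟩
  · rw [FF_t V p q m u (ne_of_lt hD₀), hu]
    ring
  · intro j hjp hjq hjm
    obtain ⟨e', he'n, rfl⟩ := zmod_exists p j
    have he'0 : e' ≠ 0 := by
      intro hh; subst hh; simp at hjp
    have he'd : e' ≠ d := by
      intro hh; subst hh; exact hjq rfl
    have he'e₀ : e' ≠ e₀ := by
      intro hh; subst hh; exact hjm rfl
    by_cases hcase : e' < d
    · have hD := hDneg e' (by omega) hcase
      have hmax' := hmax e' (Finset.mem_Ico.mpr ⟨by omega, hcase⟩)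
      have htne : tq V p q (p + (e':ℕ)) ≠ tq V p q m := by
        intro hteq
        refine four V hgen p q m (p + (e':ℕ)) u ?_ ?_ ?_ ?_ ?_ ?_ ?_ ?_
        · exact (hne_p d (by omega) hdn).symm
        · exact (hne_p e₀ (by omega) (by omega)).symm
        · exact (hne_p e' (by omega) (by omega)).symm
        · exact hcast_ne d e₀ hdn (by omega) (by omega)
        · exact hcast_ne d e' hdn (by omega) (by omega)
        · exact hcast_ne e₀ e' (by omega) (by omega) (by omega)
        · rw [FF_t V p q m u (ne_of_lt hD₀), hu]; ring
        · rw [FF_t V p q _ u (ne_of_lt hD), hu, ← hteq]; ring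
      have hlt : s * tq V p q (p + (e':ℕ)) < s * tq V p q m := by
        rcases lt_or_eq_of_le hmax' with hh | hh
        · exact hh
        · exfalso; apply htne
          rcases hs with rfl | rfl <;> [skip; skip] <;> nlinarith [hh]
      rw [FF_t V p q _ u (ne_of_lt hD)]
      rcases hs with rfl | rfl <;> nlinarith
    · have hD : 0 < DD V p q (p + (e':ℕ)) :=
        DD_exterior V hn hconv p d e' (by omega) (by omega) he'n
      have hg := h (p + (e':ℕ)) hjp hjq
      rw [FF_t V p q _ u₀ (ne_of_gt hD)] at hg
      have hu₀ : s * u < s * u₀ := hint e₀ he₀1 he₀d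
      rw [FF_t V p q _ u (ne_of_gt hD)]
      rcases hs with rfl | rfl <;> nlinarith

lemma subgood (s : ℝ) (hs : s = 1 ∨ s = -1) (x y z : ZMod n) (u₁ : ℝ)
    (hDz : 0 < DD V x y z) (h0 : FF V x y z u₁ = 0)
    (h : ∀ j, j ≠ x → j ≠ y → j ≠ z → 0 < s * FF V x y j u₁) :
    ∃ u₂, ∀ j, j ≠ x → j ≠ y → 0 < s * FF V x y j u₂ := by
  classical
  set B : Finset (ZMod n) :=
    Finset.univ.filter (fun j => j ≠ x ∧ j ≠ y ∧ j ≠ z ∧ DD V x y j < 0) with hB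
  set A : Finset ℝ :=
    insert (1:ℝ) (B.image (fun j => s * FF V x y j u₁ / (2 * (- DD V x y j)))) with hA
  have hAne : A.Nonempty := Finset.insert_nonempty _ _
  set δ := A.min' hAne / 2 with hδ
  have hApos : ∀ r ∈ A, 0 < r := by
    intro r hr
    rcases Finset.mem_insert.mp hr with rfl | hr
    · norm_num
    · obtain ⟨j, hjB, rfl⟩ := Finset.mem_image.mp hr
      obtain ⟨hjx, hjy, hjz, hjD⟩ := (Finset.mem_filter.mp hjB).2
      exact div_pos (h j hjx hjy hjz) (by linarith)
  have hδpos : 0 < δ := by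
    have := hApos _ (A.min'_mem hAne); rw [hδ]; linarith
  refine ⟨u₁ - s * δ, ?_⟩
  intro j hjx hjy
  have hFF : FF V x y j (u₁ - s*δ) = FF V x y j u₁ + 2*s*δ*DD V x y j := by
    rw [FF_affine V x y j (u₁ - s*δ), FF_affine V x y j u₁]; ring
  by_cases hjz : j = z
  · subst hjz
    rw [hFF, h0]
    have hs2 : s*s = 1 := by rcases hs with rfl|rfl <;> norm_num
    nlinarith [mul_pos hδpos hDz]
  · have hj := h j hjx hjy hjz
    by_cases hD : DD V x y j < 0
    · have hjB : j ∈ B := by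
        rw [hB]; exact Finset.mem_filter.mpr ⟨Finset.mem_univ j, hjx, hjy, hjz, hD⟩
      have hmem : s * FF V x y j u₁ / (2 * (- DD V x y j)) ∈ A := by
        rw [hA]; exact Finset.mem_insert_of_mem (Finset.mem_image_of_mem _ hjB)
      have hδlt : δ < s * FF V x y j u₁ / (2 * (- DD V x y j)) := by
        have h1 := A.min'_le _ hmem
        have h2 := hApos _ hmem
        rw [hδ]; linarith
      have hkey : δ * (2 * (-DD V x y j)) < s * FF V x y j u₁ := by
        rw [lt_div_iff₀ (by linarith)] at hδlt; linarith
      rw [hFF]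
      rcases hs with rfl | rfl <;> nlinarith [hkey]
    · push_neg at hD
      rw [hFF]
      rcases hs with rfl | rfl <;> nlinarith [mul_nonneg (le_of_lt hδpos) hD]

lemma transfer (x y a b : ZMod n) (u : ℝ) (hxy : V x ≠ V y)
    (hx : dist (ctr V a b u) (V x) = dist (ctr V a b u) (V a))
    (hy : dist (ctr V a b u) (V y) = dist (ctr V a b u) (V a)) :
    ∃ u₁ : ℝ, ∀ j, FF V x y j u₁ = FF V a b j u := by
  obtain ⟨u₁, hu₁⟩ := exists_param V x y hxy (ctr V a b u) (by rw [hx, hy])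
  refine ⟨u₁, fun j => ?_⟩
  rw [FF, FF, hu₁]
  have hxx : Complex.normSq (V x - ctr V a b u) = Complex.normSq (V a - ctr V a b u) := by
    rw [← dist_sq, ← dist_sq, hx]
  rw [hxx]

def TC (V : ZMod n → ℂ) (s : ℝ) (i : ZMod n) : Prop :=
  ∃ (O : ℂ) (r : ℝ), dist O (V (i - 1)) = r ∧ dist O (V i) = r ∧ dist O (V (i + 1)) = r ∧
    ∀ j : ZMod n, j ≠ i - 1 → j ≠ i → j ≠ i + 1 → 0 < s * (dist O (V j) - r)

include hn hconv in
lemma main (s : ℝ) (hs : s = 1 ∨ s = -1) (hgen : NoFourConcyclic V) :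
    ∀ d : ℕ, 2 ≤ d → d < n → ∀ (p : ZMod n) (u₀ : ℝ),
    (∀ j, j ≠ p → j ≠ p + (d:ℕ) → 0 < s * FF V p (p + (d:ℕ)) j u₀) →
    ∃ e : ℕ, 1 ≤ e ∧ e < d ∧ TC V s (p + (e:ℕ)) := by
  intro d
  induction d using Nat.strong_induction_on with
  | _ d ih =>
  intro hd2 hdn p u₀ hgood
  obtain ⟨e₀, he₀1, he₀d, u, hFm, hout⟩ :=
    step V hn hconv s hs hgen p d hd2 hdn u₀ hgood
  set q := p + (d:ℕ) with hq
  set m := p + (e₀:ℕ) with hm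
  set O := ctr V p q u with hO
  have hdOm : dist O (V m) = dist O (V p) := dist_eq_of_FF V p q m u hFm
  have hdOq : dist O (V q) = dist O (V p) := dist_eq_of_FF V p q q u (FF_base V p q u)
  by_cases hcase : e₀ = 1
  · subst hcase
    by_cases hd2' : d = 2
    · subst hd2'
      refine ⟨1, le_refl 1, by omega, ?_⟩
      have hi1 : p + ((1:ℕ):ZMod n) - 1 = p := by push_cast; ring
      have hi2 : p + ((1:ℕ):ZMod n) + 1 = q := by rw [hq]; push_cast; ring
      refine ⟨O, dist O (V p), ?_, ?_, ?_, ?_⟩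
      · rw [hi1]
      · exact hdOm
      · rw [hi2]; exact hdOq
      · intro j hj1 hj2 hj3
        rw [hi1] at hj1
        rw [hi2] at hj3
        exact conv_s s hs V p q j u (hout j hj1 hj3 hj2)
    · -- recurse on (m, q), d' = d - 1
      have hcast1 : m + ((d-1 : ℕ) : ZMod n) = q := by
        rw [hm, hq]; push_cast [Nat.cast_sub (by omega : 1 ≤ d)]; ring
      have hDz : 0 < DD V m q p := by
        have hc := convpos V hn hconv m (d-1) (n-1) (by omega) (by omega) (by omega)
        have hcast2 : m + ((n-1 : ℕ) : ZMod n) = p := by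
          rw [hm]; push_cast [Nat.cast_sub (by omega : 1 ≤ n), ZMod.natCast_self]; ring
        rw [hcast1, hcast2] at hc
        rw [DD]
        exact hc
      have hVmq : V m ≠ V q := by
        intro hh
        rw [DD, hh, sub_self] at hDz
        rw [planeDet_zero_left] at hDz
        exact lt_irrefl 0 hDz
      obtain ⟨u₁, htr⟩ := transfer V m q p q u hVmq hdOm hdOq
      have h0 : FF V m q p u₁ = 0 := by rw [htr p]; exact FF_self V p q u
      obtain ⟨u₂, hgood₂⟩ := subgood V s hs m q p u₁ hDz h0
        (fun j h1 h2 h3 => by rw [htr j]; exact hout j h3 h2 h1)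
      have hrec := ih (d-1) (by omega) (by omega) (by omega) m u₂
      rw [hcast1] at hrec
      obtain ⟨e', he'1, he'lt, hTC⟩ := hrec hgood₂
      refine ⟨e' + 1, by omega, by omega, ?_⟩
      have : m + ((e' : ℕ) : ZMod n) = p + ((e'+1 : ℕ) : ZMod n) := by
        rw [hm]; push_cast; ring
      rwa [this] at hTC
  · -- e₀ ≥ 2 : recurse on (p, m), d' = e₀
    have hDz : 0 < DD V p m q := by
      have hc := convpos V hn hconv p e₀ d (by omega) he₀d hdn
      rw [DD]; exact hc
    have hVpm : V p ≠ V m := by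
      intro hh
      rw [DD, ← hh, sub_self] at hDz
      rw [planeDet_zero_left] at hDz
      exact lt_irrefl 0 hDz
    obtain ⟨u₁, htr⟩ := transfer V p m p q u hVpm rfl hdOm
    have h0 : FF V p m q u₁ = 0 := by rw [htr q]; exact FF_base V p q u
    obtain ⟨u₂, hgood₂⟩ := subgood V s hs p m q u₁ hDz h0
      (fun j h1 h2 h3 => by rw [htr j]; exact hout j h1 h3 h2)
    have hrec := ih e₀ (by omega) (by omega) (by omega) p u₂
    rw [← hm] at hrec
    obtain ⟨e', he'1, he'lt, hTC⟩ := hrec hgood₂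
    exact ⟨e', he'1, by omega, hTC⟩

include hn hconv in
lemma edge_good (s : ℝ) (hs : s = 1 ∨ s = -1) (i : ZMod n) :
    ∃ u₀ : ℝ, ∀ j, j ≠ i → j ≠ i + 1 → 0 < s * FF V i (i+1) j u₀ := by
  classical
  set T : Finset ℝ := Finset.univ.image (fun j : ZMod n => |tq V i (i+1) j|) with hT
  set c := (insert (0:ℝ) T).max' (Finset.insert_nonempty _ _) + 1 with hc
  have hcb : ∀ j : ZMod n, |tq V i (i+1) j| ≤ c - 1 := by
    intro j
    have : |tq V i (i+1) j| ∈ insert (0:ℝ) T := by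
      rw [hT]; exact Finset.mem_insert_of_mem (Finset.mem_image_of_mem _ (Finset.mem_univ j))
    have := Finset.le_max' _ _ this
    rw [hc]; linarith
  refine ⟨-s * c, ?_⟩
  intro j hj1 hj2
  have hD : 0 < DD V i (i+1) j := hconv i j hj1 hj2
  rw [FF_t V i (i+1) j _ (ne_of_gt hD)]
  have h1 := hcb j
  have h2 := abs_nonneg (tq V i (i+1) j)
  have h3 := le_abs_self (tq V i (i+1) j)
  have h4 := neg_abs_le (tq V i (i+1) j)
  rcases hs with rfl | rfl <;> nlinarith

include hn hconv in
lemma two_tc (s : ℝ) (hs : s = 1 ∨ s = -1) (hgen : NoFourConcyclic V) :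
    ∃ i₁ i₂ : ZMod n, i₁ ≠ i₂ ∧ TC V s i₁ ∧ TC V s i₂ := by
  have h2n : ((2:ℕ) : ZMod n) ≠ 0 := zmod_nz (by norm_num) (by omega)
  have h1n : ((1:ℕ) : ZMod n) ≠ 0 := zmod_nz (by norm_num) (by omega)
  push_cast at h2n h1n
  obtain ⟨u₀, hg⟩ := edge_good V hn hconv s hs 0
  simp only [zero_add] at hg
  have hV01 : V (1:ZMod n) ≠ V 0 := by
    intro hh
    have := hconv 0 2 (by
        intro h; exact h2n (by exact_mod_cast h))
      (by
        intro h; rw [zero_add] at h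
        exact h1n (by linear_combination (h : (2:ZMod n) = 1)))
    rw [zero_add, hh, sub_self, planeDet_zero_left] at this
    exact lt_irrefl 0 this
  have hd01 : dist (ctr V 0 1 u₀) (V 1) = dist (ctr V 0 1 u₀) (V 0) :=
    dist_eq_of_FF V 0 1 1 u₀ (FF_base V 0 1 u₀)
  obtain ⟨u₁, htr⟩ := transfer V 1 0 0 1 u₀ hV01 hd01 rfl
  have hq0 : (1 : ZMod n) + ((n-1 : ℕ) : ZMod n) = 0 := by
    push_cast [Nat.cast_sub (by omega : 1 ≤ n), ZMod.natCast_self]; ring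
  have hstep_in : ∀ j, j ≠ (1:ZMod n) → j ≠ (1:ZMod n) + ((n-1:ℕ) : ZMod n) →
      0 < s * FF V 1 ((1:ZMod n) + ((n-1:ℕ):ZMod n)) j u₁ := by
    intro j hj1 hj0
    rw [hq0] at hj0 ⊢
    rw [htr j]
    exact hg j hj0 hj1
  obtain ⟨e₀, he₀1, he₀d, u, hFm, hout⟩ :=
    step V hn hconv s hs hgen 1 (n-1) (by omega) (by omega) u₁ hstep_in
  rw [hq0] at hFm hout
  set m := (1:ZMod n) + ((e₀:ℕ) : ZMod n) with hm
  set O := ctr V 1 0 u with hO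
  have hdOm : dist O (V m) = dist O (V 1) := dist_eq_of_FF V 1 0 m u hFm
  have hdOq : dist O (V 0) = dist O (V 1) := dist_eq_of_FF V 1 0 0 u (FF_base V 1 0 u)
  by_cases hA : e₀ = 1
  · -- m = 2 : TC s 1 and recurse on (2, 0)
    have hm2 : m = 2 := by rw [hm, hA]; push_cast; ring
    have hi₁ : TC V s 1 := by
      refine ⟨O, dist O (V 1), ?_, rfl, ?_, ?_⟩
      · show dist O (V (1-1)) = _
        rw [sub_self]
        exact hdOq
      · show dist O (V (1+1)) = _
        have h11 : (1:ZMod n) + 1 = m := by rw [hm2]; norm_num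
        rw [h11]
        exact hdOm
      · intro j hj1 hj2 hj3
        have hj1' : j ≠ 0 := by rwa [sub_self] at hj1
        have hj3' : j ≠ m := by rw [hm2, ← one_add_one_eq_two]; exact hj3
        exact conv_s s hs V 1 0 j u (hout j hj2 hj1' hj3')
    have hDz : 0 < DD V 2 0 1 := by
      have hc := convpos V hn hconv 2 (n-2) (n-1) (by omega) (by omega) (by omega)
      have hc1 : (2:ZMod n) + ((n-2 : ℕ) : ZMod n) = 0 := by
        push_cast [Nat.cast_sub (by omega : 2 ≤ n), ZMod.natCast_self]; ring
      have hc2 : (2:ZMod n) + ((n-1 : ℕ) : ZMod n) = 1 := by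
        push_cast [Nat.cast_sub (by omega : 1 ≤ n), ZMod.natCast_self]; ring
      rw [hc1, hc2] at hc
      exact hc
    have hV20 : V 2 ≠ V 0 := by
      intro hh
      rw [DD, hh, sub_self, planeDet_zero_left] at hDz
      exact lt_irrefl 0 hDz
    obtain ⟨u₁', htr'⟩ := transfer V 2 0 1 0 u hV20 (by rw [← hO, ← hm2]; exact hdOm)
      (by rw [← hO]; exact hdOq)
    have h0' : FF V 2 0 1 u₁' = 0 := by rw [htr' 1]; exact FF_self V 1 0 u
    obtain ⟨u₂, hgood₂⟩ := subgood V s hs 2 0 1 u₁' hDz h0'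
      (fun j h1 h2 h3 => by
        rw [htr' j]
        exact hout j h3 h2 (by rwa [hm2]))
    have hcast20 : (2:ZMod n) + ((n-2 : ℕ) : ZMod n) = 0 := by
      push_cast [Nat.cast_sub (by omega : 2 ≤ n), ZMod.natCast_self]; ring
    have hmain := main V hn hconv s hs hgen (n-2) (by omega) (by omega) 2 u₂
    rw [hcast20] at hmain
    obtain ⟨e', he'1, he'lt, hTC⟩ := hmain hgood₂
    refine ⟨1, 2 + ((e':ℕ) : ZMod n), ?_, hi₁, hTC⟩
    intro hh
    have : ((e' + 1 : ℕ) : ZMod n) = 0 := by push_cast; linear_combination -hh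
    exact zmod_nz (k := e'+1) (by omega) (by omega) this
  · by_cases hB : e₀ = n - 2
    · -- m = -1 : TC s 0 and recurse on (1, m)
      have hmm : m = -1 := by
        rw [hm, hB]
        push_cast [Nat.cast_sub (by omega : 2 ≤ n), ZMod.natCast_self]; ring
      have hi₁ : TC V s 0 := by
        refine ⟨O, dist O (V 1), ?_, ?_, ?_, ?_⟩
        · show dist O (V (0-1)) = _
          rw [zero_sub, ← hmm]
          exact hdOm
        · exact hdOq
        · show dist O (V (0+1)) = _
          rw [zero_add]
        · intro j hj1 hj2 hj3
          have hj1' : j ≠ m := by rwa [hmm, ← zero_sub]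
          have hj3' : j ≠ 1 := by rwa [zero_add] at hj3
          exact conv_s s hs V 1 0 j u (hout j hj3' hj2 hj1')
      have hDz : 0 < DD V 1 m 0 := by
        have hc := convpos V hn hconv 1 (n-2) (n-1) (by omega) (by omega) (by omega)
        rw [hq0, ← hB] at hc
        rw [← hm] at hc
        exact hc
      have hV1m : V 1 ≠ V m := by
        intro hh
        rw [DD, ← hh, sub_self, planeDet_zero_left] at hDz
        exact lt_irrefl 0 hDz
      obtain ⟨u₁', htr'⟩ := transfer V 1 m 1 0 u hV1m rfl hdOm
      have h0' : FF V 1 m 0 u₁' = 0 := by rw [htr' 0]; exact FF_base V 1 0 u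
      obtain ⟨u₂, hgood₂⟩ := subgood V s hs 1 m 0 u₁' hDz h0'
        (fun j h1 h2 h3 => by rw [htr' j]; exact hout j h1 h3 h2)
      have hmain := main V hn hconv s hs hgen (n-2) (by omega) (by omega) 1 u₂
      rw [← hB, ← hm] at hmain
      obtain ⟨e', he'1, he'lt, hTC⟩ := hmain hgood₂
      refine ⟨0, 1 + ((e':ℕ) : ZMod n), ?_, hi₁, hTC⟩
      intro hh
      have : ((e' + 1 : ℕ) : ZMod n) = 0 := by push_cast; linear_combination -hh
      exact zmod_nz (k := e'+1) (by omega) (by omega) this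
    · -- 2 ≤ e₀ ≤ n-3 : two sub-chords (1, m) and (m, 0)
      have hDz1 : 0 < DD V 1 m 0 := by
        have hc := convpos V hn hconv 1 e₀ (n-1) (by omega) (by omega) (by omega)
        rw [hq0, ← hm] at hc
        exact hc
      have hV1m : V 1 ≠ V m := by
        intro hh
        rw [DD, ← hh, sub_self, planeDet_zero_left] at hDz1
        exact lt_irrefl 0 hDz1
      obtain ⟨u₁', htr'⟩ := transfer V 1 m 1 0 u hV1m rfl hdOm
      have h0' : FF V 1 m 0 u₁' = 0 := by rw [htr' 0]; exact FF_base V 1 0 u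
      obtain ⟨u₂, hgood₂⟩ := subgood V s hs 1 m 0 u₁' hDz1 h0'
        (fun j h1 h2 h3 => by rw [htr' j]; exact hout j h1 h3 h2)
      have hmain1 := main V hn hconv s hs hgen e₀ (by omega) (by omega) 1 u₂
      rw [← hm] at hmain1
      obtain ⟨e₁, he₁1, he₁lt, hTC1⟩ := hmain1 hgood₂
      -- second chord (m, 0)
      have hDz2 : 0 < DD V m 0 1 := by
        have hc := convpos V hn hconv m (n-1-e₀) (n-e₀) (by omega) (by omega) (by omega)
        have hc1 : m + ((n-1-e₀ : ℕ) : ZMod n) = 0 := by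
          rw [hm]
          push_cast [Nat.cast_sub (by omega : e₀ ≤ n-1), Nat.cast_sub (by omega : 1 ≤ n),
            ZMod.natCast_self]
          ring
        have hc2 : m + ((n-e₀ : ℕ) : ZMod n) = 1 := by
          rw [hm]
          push_cast [Nat.cast_sub (by omega : e₀ ≤ n), ZMod.natCast_self]
          ring
        rw [hc1, hc2] at hc
        exact hc
      have hVm0 : V m ≠ V 0 := by
        intro hh
        rw [DD, hh, sub_self, planeDet_zero_left] at hDz2
        exact lt_irrefl 0 hDz2
      obtain ⟨u₁'', htr''⟩ := transfer V m 0 1 0 u hVm0 hdOm hdOq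
      have h0'' : FF V m 0 1 u₁'' = 0 := by rw [htr'' 1]; exact FF_self V 1 0 u
      obtain ⟨u₂', hgood₂'⟩ := subgood V s hs m 0 1 u₁'' hDz2 h0''
        (fun j h1 h2 h3 => by rw [htr'' j]; exact hout j h3 h2 h1)
      have hcastm0 : m + ((n-1-e₀ : ℕ) : ZMod n) = 0 := by
        rw [hm]
        push_cast [Nat.cast_sub (by omega : e₀ ≤ n-1), Nat.cast_sub (by omega : 1 ≤ n),
          ZMod.natCast_self]
        ring
      have hmain2 := main V hn hconv s hs hgen (n-1-e₀) (by omega) (by omega) m u₂'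
      rw [hcastm0] at hmain2
      obtain ⟨e₂, he₂1, he₂lt, hTC2⟩ := hmain2 hgood₂'
      refine ⟨1 + ((e₁:ℕ) : ZMod n), m + ((e₂:ℕ) : ZMod n), ?_, hTC1, hTC2⟩
      intro hh
      rw [hm] at hh
      have hh2 : ((e₁ : ℕ) : ZMod n) = ((e₀ + e₂ : ℕ) : ZMod n) := by
        push_cast at hh ⊢
        linear_combination hh
      have := zmod_cast_inj (by omega) (by omega) hh2
      omega

lemma TC_empty (i : ZMod n) (h : TC V 1 i) : EmptyNbrCircle V i := by
  obtain ⟨O, r, h1, h2, h3, h4⟩ := h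
  exact ⟨O, r, h1, h2, h3, fun j hj1 hj2 hj3 => by have := h4 j hj1 hj2 hj3; linarith⟩

lemma TC_full (i : ZMod n) (h : TC V (-1) i) : FullNbrCircle V i := by
  obtain ⟨O, r, h1, h2, h3, h4⟩ := h
  exact ⟨O, r, h1, h2, h3, fun j hj1 hj2 hj3 => by have := h4 j hj1 hj2 hj3; linarith⟩

include hn hconv in
lemma not_both (i : ZMod n) (hE : EmptyNbrCircle V i) (hF : FullNbrCircle V i) : False := by
  obtain ⟨O₁, r₁, h11, h12, h13, h14⟩ := hE
  obtain ⟨O₂, r₂, h21, h22, h23, h24⟩ := hF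
  have h2n : ((2:ℕ) : ZMod n) ≠ 0 := zmod_nz (by norm_num) (by omega)
  have h1n : ((1:ℕ) : ZMod n) ≠ 0 := zmod_nz (by norm_num) (by omega)
  have h3n : ((3:ℕ) : ZMod n) ≠ 0 := zmod_nz (by norm_num) (by omega)
  push_cast at h2n h1n h3n
  have noncol : 0 < planeDet (V i - V (i-1)) (V (i+1) - V (i-1)) := by
    have := hconv (i-1) (i+1) (fun h => h2n (by linear_combination h))
      (by rw [sub_add_cancel]; exact fun h => h1n (by linear_combination h))
    rwa [sub_add_cancel] at this
  set A := V (i-1) with hA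
  set B := V i with hB
  set C := V (i+1) with hC
  -- squared-distance equalities
  have sq1 : ∀ (O : ℂ) (r : ℝ) (X : ℂ), dist O X = r → Complex.normSq (X - O) = r^2 := by
    intro O r X h
    rw [← dist_sq, h]
  have e1 : Complex.normSq (B - O₁) - Complex.normSq (A - O₁) = 0 := by
    rw [sq1 O₁ r₁ B h12, sq1 O₁ r₁ A h11]; ring
  have e2 : Complex.normSq (B - O₂) - Complex.normSq (A - O₂) = 0 := by
    rw [sq1 O₂ r₂ B h22, sq1 O₂ r₂ A h21]; ring
  have e3 : Complex.normSq (C - O₁) - Complex.normSq (A - O₁) = 0 := by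
    rw [sq1 O₁ r₁ C h13, sq1 O₁ r₁ A h11]; ring
  have e4 : Complex.normSq (C - O₂) - Complex.normSq (A - O₂) = 0 := by
    rw [sq1 O₂ r₂ C h23, sq1 O₂ r₂ A h21]; ring
  simp only [Complex.normSq_apply, Complex.sub_re, Complex.sub_im] at e1 e2 e3 e4
  have h1 : (B - A).re * (O₁ - O₂).re + (B - A).im * (O₁ - O₂).im = 0 := by
    simp only [Complex.sub_re, Complex.sub_im]
    linear_combination (-(1:ℝ)/2) * e1 + ((1:ℝ)/2) * e2
  have h2 : (C - A).re * (O₁ - O₂).re + (C - A).im * (O₁ - O₂).im = 0 := by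
    simp only [Complex.sub_re, Complex.sub_im]
    linear_combination (-(1:ℝ)/2) * e3 + ((1:ℝ)/2) * e4
  have hdet : 0 < (B - A).re * (C - A).im - (B - A).im * (C - A).re := noncol
  have hre : (O₁ - O₂).re = 0 := by
    have hkey : (O₁ - O₂).re * ((B - A).re * (C - A).im - (B - A).im * (C - A).re) = 0 := by
      linear_combination (C - A).im * h1 - (B - A).im * h2
    rcases mul_eq_zero.mp hkey with h | h
    · exact h
    · linarith
  have him : (O₁ - O₂).im = 0 := by
    have hkey : (O₁ - O₂).im * ((B - A).re * (C - A).im - (B - A).im * (C - A).re) = 0 := by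
      linear_combination (B - A).re * h2 - (C - A).re * h1
    rcases mul_eq_zero.mp hkey with h | h
    · exact h
    · linarith
  have hO : O₁ = O₂ := by
    have : O₁ - O₂ = 0 := by
      apply Complex.ext <;> simp [Complex.sub_re, Complex.sub_im] at hre him ⊢ <;>
        [linarith [hre]; linarith [him]]
    linear_combination this
  have hr : r₁ = r₂ := by rw [← h12, ← h22, hO]
  have hcond1 : i + 2 ≠ i - 1 := fun h => h3n (by linear_combination h)
  have hcond2 : i + 2 ≠ i := fun h => h2n (by linear_combination h)
  have hcond3 : i + 2 ≠ i + 1 := fun h => h1n (by linear_combination h)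
  have q1 := h14 (i+2) hcond1 hcond2 hcond3
  have q2 := h24 (i+2) hcond1 hcond2 hcond3
  rw [hO, hr] at q1
  linarith

end Sedykh

/-- **Sedykh's theorem for equilateral polygons.** In an equilateral convex
polygon with no four vertices concyclic, every two neighboring vertices lie on a circle empty
of the other vertices, and at least four of the neighboring circles `Cᵢ` are extremal
(empty or full). -/
theorem equilateral_sedykh (n : ℕ) [NeZero n] (hn : 3 < n) (V : ZMod n → ℂ)
    (hconv : IsConvexPolygon V) (hgen : NoFourConcyclic V)
    (hequi : ∀ i j : ZMod n, dist (V i) (V (i + 1)) = dist (V j) (V (j + 1))) :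
    (∀ i : ZMod n, ∃ (O : ℂ) (r : ℝ), dist O (V i) = r ∧ dist O (V (i + 1)) = r ∧
      ∀ j : ZMod n, j ≠ i → j ≠ i + 1 → r < dist O (V j)) ∧
    4 ≤ Set.ncard {i : ZMod n | EmptyNbrCircle V i ∨ FullNbrCircle V i} := by
  open Sedykh in
  constructor
  · intro i
    obtain ⟨u₀, hg⟩ := Sedykh.edge_good V hn hconv 1 (Or.inl rfl) i
    refine ⟨Sedykh.ctr V i (i+1) u₀, dist (Sedykh.ctr V i (i+1) u₀) (V i), rfl,
      Sedykh.dist_eq_of_FF V i (i+1) (i+1) u₀ (Sedykh.FF_base V i (i+1) u₀), ?_⟩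
    intro j hj1 hj2
    have := Sedykh.conv_s 1 (Or.inl rfl) V i (i+1) j u₀ (hg j hj1 hj2)
    linarith
  · obtain ⟨i₁, i₂, h12, hT1, hT2⟩ := Sedykh.two_tc V hn hconv 1 (Or.inl rfl) hgen
    obtain ⟨i₃, i₄, h34, hT3, hT4⟩ := Sedykh.two_tc V hn hconv (-1) (Or.inr rfl) hgen
    have hE1 := Sedykh.TC_empty V i₁ hT1
    have hE2 := Sedykh.TC_empty V i₂ hT2
    have hF3 := Sedykh.TC_full V i₃ hT3
    have hF4 := Sedykh.TC_full V i₄ hT4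
    have hEF : ∀ i : ZMod n, EmptyNbrCircle V i → FullNbrCircle V i → False :=
      fun i => Sedykh.not_both V hn hconv i
    have h13 : i₁ ≠ i₃ := fun h => hEF i₁ hE1 (h ▸ hF3)
    have h14 : i₁ ≠ i₄ := fun h => hEF i₁ hE1 (h ▸ hF4)
    have h23 : i₂ ≠ i₃ := fun h => hEF i₂ hE2 (h ▸ hF3)
    have h24 : i₂ ≠ i₄ := fun h => hEF i₂ hE2 (h ▸ hF4)
    have hsub : ({i₁, i₂, i₃, i₄} : Set (ZMod n)) ⊆
        {i : ZMod n | EmptyNbrCircle V i ∨ FullNbrCircle V i} := by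
      intro x hx
      simp only [Set.mem_insert_iff, Set.mem_singleton_iff] at hx
      rcases hx with rfl | rfl | rfl | rfl <;> simp only [Set.mem_setOf_eq]
      · exact Or.inl hE1
      · exact Or.inl hE2
      · exact Or.inr hF3
      · exact Or.inr hF4
    have hcard : Set.ncard ({i₁, i₂, i₃, i₄} : Set (ZMod n)) = 4 := by
      rw [Set.ncard_insert_of_notMem (by simp [h12, h13, h14]) (Set.toFinite _),
        Set.ncard_insert_of_notMem (by simp [h23, h24]) (Set.toFinite _),
        Set.ncard_insert_of_notMem (by simp [h34]) (Set.toFinite _),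
        Set.ncard_singleton]
    have := Set.ncard_le_ncard hsub (Set.toFinite _)
    omega
end

section
/- For any point p strictly outside a strictly convex polygon Γ in the plane, there are exactly two tangent lines from p to Γ, i.e., exactly two vertices V of Γ such that both neighbors of V lie strictly on one side of the line through p and V. -/
/-- The line through `p` and `V i` is tangent to the polygonal line `V`: both neighbours of
`V i` lie strictly on one side of it. -/
def IsTangentVertex {n : ℕ} (V : ZMod n → ℂ) (p : ℂ) (i : ZMod n) : Prop :=
  (0 < planeDet (V i - p) (V (i - 1) - p) ∧ 0 < planeDet (V i - p) (V (i + 1) - p)) ∨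
  (planeDet (V i - p) (V (i - 1) - p) < 0 ∧ planeDet (V i - p) (V (i + 1) - p) < 0)

/- ### Auxiliary lemmas -/

lemma planeDet_skew (u v : ℂ) : planeDet u v = -planeDet v u := by
  simp only [planeDet, Complex.sub_re, Complex.sub_im, Complex.add_re, Complex.add_im]; ring

lemma planeDet_mul (m u v : ℂ) :
    planeDet (m * u) (m * v) = (m.re ^ 2 + m.im ^ 2) * planeDet u v := by
  unfold planeDet
  simp [Complex.mul_re, Complex.mul_im]
  ring

/-- Plücker-type cone lemma. -/
lemma planeDet_cone {e1 e2 w q : ℂ} (hC : 0 < planeDet e1 e2)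
    (hA : 0 < planeDet e1 w) (hB : 0 < planeDet e2 w)
    (h1 : 0 < planeDet q e1) (h2 : planeDet q e2 < 0) :
    planeDet q w < 0 := by
  have hid : planeDet q w * planeDet e1 e2 =
      -(planeDet e2 w) * planeDet q e1 + (planeDet e1 w) * planeDet q e2 := by
    simp only [planeDet, Complex.sub_re, Complex.sub_im, Complex.add_re, Complex.add_im]; ring
  nlinarith

lemma planeDet_cone' {e1 e2 w q : ℂ} (hC : 0 < planeDet e1 e2)
    (hA : 0 < planeDet e1 w) (hB : 0 < planeDet e2 w)
    (h1 : planeDet q e1 < 0) (h2 : 0 < planeDet q e2) :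
    0 < planeDet q w := by
  have hid : planeDet q w * planeDet e1 e2 =
      -(planeDet e2 w) * planeDet q e1 + (planeDet e1 w) * planeDet q e2 := by
    simp only [planeDet, Complex.sub_re, Complex.sub_im, Complex.add_re, Complex.add_im]; ring
  nlinarith

/-- The normalized main lemma: `p = 0` and all vertices have negative real part. -/
lemma two_tangent_lines_aux (n : ℕ) [NeZero n] (hn : 3 ≤ n) (U : ZMod n → ℂ)
    (hre : ∀ j, (U j).re < 0)
    (hconv : IsConvexPolygon U)
    (hne : ∀ i j : ZMod n, i ≠ j → planeDet (U i) (U j) ≠ 0) :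
    Set.ncard {i : ZMod n | IsTangentVertex U 0 i} = 2 := by
  have hone : (1 : ZMod n) ≠ 0 := by
    intro h
    have : (n : ℕ) ∣ 1 := by
      have := (ZMod.natCast_eq_zero_iff 1 n).mp (by exact_mod_cast h)
      exact this
    have := Nat.le_of_dvd one_pos this
    omega
  have htwo : (2 : ZMod n) ≠ 0 := by
    intro h
    have : (n : ℕ) ∣ 2 := by
      have := (ZMod.natCast_eq_zero_iff 2 n).mp (by exact_mod_cast h)
      exact this
    have := Nat.le_of_dvd two_pos this
    omega
  have hadd1 : ∀ i : ZMod n, i + 1 ≠ i := by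
    intro i h; exact hone (by linear_combination h - (0 : ZMod n))
  have hsub1 : ∀ i : ZMod n, i - 1 ≠ i := by
    intro i h; exact hone (by linear_combination (0:ZMod n) - h)
  have hpm : ∀ i : ZMod n, i + 1 ≠ i - 1 := by
    intro i h; exact htwo (by linear_combination h)
  have hre' : ∀ j, (U j).re ≠ 0 := fun j => ne_of_lt (hre j)
  set t : ZMod n → ℝ := fun j => (U j).im / (U j).re with ht
  have hdet : ∀ i j, planeDet (U i) (U j) = ((U i).re * (U j).re) * (t j - t i) := by
    intro i j
    have hi := hre' i
    have hj := hre' j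
    unfold planeDet
    rw [ht]
    field_simp
  have hprodpos : ∀ i j : ZMod n, 0 < (U i).re * (U j).re :=
    fun i j => mul_pos_of_neg_of_neg (hre i) (hre j)
  have htlt : ∀ i j, t i < t j ↔ 0 < planeDet (U i) (U j) := by
    intro i j
    rw [hdet i j]
    constructor
    · intro h; exact mul_pos (hprodpos i j) (by linarith)
    · intro h
      nlinarith [hprodpos i j]
  have hinj : ∀ i j : ZMod n, i ≠ j → t i ≠ t j := by
    intro i j hij h
    apply hne i j hij
    rw [hdet i j, h]; ring
  -- cone consequence: a local max (w.r.t. t) is a strict global max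
  have hmax : ∀ i : ZMod n, t (i - 1) < t i → t (i + 1) < t i →
      ∀ j, j ≠ i → t j < t i := by
    intro i h1 h2 j hj
    rcases eq_or_ne j (i - 1) with rfl | hj1
    · exact h1
    rcases eq_or_ne j (i + 1) with rfl | hj2
    · exact h2
    set e1 := U i - U (i - 1) with he1
    set e2 := U (i + 1) - U i with he2
    set w := U j - U i with hw
    have hC : 0 < planeDet e1 e2 := by
      have := hconv (i - 1) (i + 1) (hpm i) (by rw [sub_add_cancel]; exact hadd1 i)
      rw [sub_add_cancel] at this
      have heq : planeDet (U i - U (i-1)) (U (i+1) - U (i-1)) = planeDet e1 e2 := by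
        rw [he1, he2]; simp only [planeDet, Complex.sub_re, Complex.sub_im, Complex.add_re, Complex.add_im]; ring
      rwa [heq] at this
    have hA : 0 < planeDet e1 w := by
      have := hconv (i - 1) j hj1 (by rw [sub_add_cancel]; exact hj)
      rw [sub_add_cancel] at this
      have heq : planeDet (U i - U (i-1)) (U j - U (i-1)) = planeDet e1 w := by
        rw [he1, hw]; simp only [planeDet, Complex.sub_re, Complex.sub_im, Complex.add_re, Complex.add_im]; ring
      rwa [heq] at this
    have hB : 0 < planeDet e2 w := hconv i j hj hj2
    have hq1 : 0 < planeDet (U i) e1 := by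
      have h1' : 0 < planeDet (U (i-1)) (U i) := (htlt _ _).mp h1
      have heq : planeDet (U i) e1 = planeDet (U (i-1)) (U i) := by
        rw [he1]; simp only [planeDet, Complex.sub_re, Complex.sub_im, Complex.add_re, Complex.add_im]; ring
      rwa [heq]
    have hq2 : planeDet (U i) e2 < 0 := by
      have h2' : 0 < planeDet (U (i+1)) (U i) := (htlt _ _).mp h2
      have heq : planeDet (U i) e2 = -planeDet (U (i+1)) (U i) := by
        rw [he2]; simp only [planeDet, Complex.sub_re, Complex.sub_im, Complex.add_re, Complex.add_im]; ring
      rw [heq]; linarith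
    have hlt : planeDet (U i) w < 0 := planeDet_cone hC hA hB hq1 hq2
    have heq : planeDet (U j) (U i) = -planeDet (U i) w := by
      rw [hw]; simp only [planeDet, Complex.sub_re, Complex.sub_im, Complex.add_re, Complex.add_im]; ring
    exact (htlt j i).mpr (by rw [heq]; linarith)
  have hmin : ∀ i : ZMod n, t i < t (i - 1) → t i < t (i + 1) →
      ∀ j, j ≠ i → t i < t j := by
    intro i h1 h2 j hj
    rcases eq_or_ne j (i - 1) with rfl | hj1
    · exact h1
    rcases eq_or_ne j (i + 1) with rfl | hj2
    · exact h2
    set e1 := U i - U (i - 1) with he1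
    set e2 := U (i + 1) - U i with he2
    set w := U j - U i with hw
    have hC : 0 < planeDet e1 e2 := by
      have := hconv (i - 1) (i + 1) (hpm i) (by rw [sub_add_cancel]; exact hadd1 i)
      rw [sub_add_cancel] at this
      have heq : planeDet (U i - U (i-1)) (U (i+1) - U (i-1)) = planeDet e1 e2 := by
        rw [he1, he2]; simp only [planeDet, Complex.sub_re, Complex.sub_im, Complex.add_re, Complex.add_im]; ring
      rwa [heq] at this
    have hA : 0 < planeDet e1 w := by
      have := hconv (i - 1) j hj1 (by rw [sub_add_cancel]; exact hj)
      rw [sub_add_cancel] at this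
      have heq : planeDet (U i - U (i-1)) (U j - U (i-1)) = planeDet e1 w := by
        rw [he1, hw]; simp only [planeDet, Complex.sub_re, Complex.sub_im, Complex.add_re, Complex.add_im]; ring
      rwa [heq] at this
    have hB : 0 < planeDet e2 w := hconv i j hj hj2
    have hq1 : planeDet (U i) e1 < 0 := by
      have h1' : 0 < planeDet (U i) (U (i-1)) := (htlt _ _).mp h1
      have heq : planeDet (U i) e1 = -planeDet (U i) (U (i-1)) := by
        rw [he1]; simp only [planeDet, Complex.sub_re, Complex.sub_im, Complex.add_re, Complex.add_im]; ring
      rw [heq]; linarith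
    have hq2 : 0 < planeDet (U i) e2 := by
      have h2' : 0 < planeDet (U i) (U (i+1))  := (htlt _ _).mp h2
      have heq : planeDet (U i) e2 = planeDet (U i) (U (i+1)) := by
        rw [he2]; simp only [planeDet, Complex.sub_re, Complex.sub_im, Complex.add_re, Complex.add_im]; ring
      rwa [heq]
    have hlt : 0 < planeDet (U i) w := planeDet_cone' hC hA hB hq1 hq2
    have heq : planeDet (U i) (U j) = planeDet (U i) w := by
      rw [hw]; simp only [planeDet, Complex.sub_re, Complex.sub_im, Complex.add_re, Complex.add_im]; ring
    exact (htlt i j).mpr (by rw [heq]; exact hlt)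
  -- global max and min
  obtain ⟨Mx, hMx⟩ := Finite.exists_max t
  obtain ⟨mn, hmn⟩ := Finite.exists_min t
  have hMx' : ∀ j, j ≠ Mx → t j < t Mx :=
    fun j hj => lt_of_le_of_ne (hMx j) (hinj j Mx hj)
  have hmn' : ∀ j, j ≠ mn → t mn < t j :=
    fun j hj => lt_of_le_of_ne (hmn j) (Ne.symm (hinj j mn hj))
  have hmnMx : mn ≠ Mx := by
    intro h
    have h1 := hMx' (Mx + 1) (hadd1 Mx)
    have h2 := hmn (Mx + 1)
    rw [h] at h2; linarith
  -- tangency characterization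
  have hTV : ∀ i : ZMod n, IsTangentVertex U 0 i ↔
      ((t i < t (i - 1) ∧ t i < t (i + 1)) ∨ (t (i - 1) < t i ∧ t (i + 1) < t i)) := by
    intro i
    unfold IsTangentVertex
    simp only [sub_zero]
    constructor
    · rintro (⟨h1, h2⟩ | ⟨h1, h2⟩)
      · exact Or.inl ⟨(htlt i (i-1)).mpr h1, (htlt i (i+1)).mpr h2⟩
      · refine Or.inr ⟨(htlt (i-1) i).mpr ?_, (htlt (i+1) i).mpr ?_⟩
        · rw [planeDet_skew]; linarith
        · rw [planeDet_skew]; linarith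
    · rintro (⟨h1, h2⟩ | ⟨h1, h2⟩)
      · exact Or.inl ⟨(htlt i (i-1)).mp h1, (htlt i (i+1)).mp h2⟩
      · refine Or.inr ⟨?_, ?_⟩
        · have := (htlt (i-1) i).mp h1; rw [planeDet_skew] at this; linarith
        · have := (htlt (i+1) i).mp h2; rw [planeDet_skew] at this; linarith
  have hset : {i : ZMod n | IsTangentVertex U 0 i} = {mn, Mx} := by
    ext i
    simp only [Set.mem_setOf_eq, Set.mem_insert_iff, Set.mem_singleton_iff]
    rw [hTV i]
    constructor
    · rintro (⟨h1, h2⟩ | ⟨h1, h2⟩)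
      · left
        by_contra hne'
        exact absurd (hmin i h1 h2 mn (fun h => hne' h.symm)) (not_lt.mpr (hmn i))
      · right
        by_contra hne'
        exact absurd (hmax i h1 h2 Mx (fun h => hne' h.symm)) (not_lt.mpr (hMx i))
    · rintro (rfl | rfl)
      · exact Or.inl ⟨hmn' (i - 1) (hsub1 i), hmn' (i + 1) (hadd1 i)⟩
      · exact Or.inr ⟨hMx' (i - 1) (hsub1 i), hMx' (i + 1) (hadd1 i)⟩
  rw [hset, Set.ncard_pair hmnMx]


lemma exists_real_smul {u v : ℂ} (hu : u ≠ 0) (h : planeDet u v = 0) :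
    ∃ r : ℝ, v = r • u := by
  have h' : u.re * v.im - u.im * v.re = 0 := h
  by_cases hr : u.re = 0
  · have hi : u.im ≠ 0 := fun h'' => hu (Complex.ext hr h'')
    refine ⟨v.im / u.im, ?_⟩
    apply Complex.ext
    · simp only [Complex.real_smul, Complex.mul_re, Complex.ofReal_re, Complex.ofReal_im,
        zero_mul, sub_zero]
      rw [hr, mul_zero]
      rcases mul_eq_zero.mp (show u.im * v.re = 0 by rw [hr] at h'; linarith) with h'' | h''
      · exact absurd h'' hi
      · exact h''
    · simp only [Complex.real_smul, Complex.mul_im, Complex.ofReal_re, Complex.ofReal_im,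
        zero_mul, add_zero]
      field_simp
  · refine ⟨v.re / u.re, ?_⟩
    apply Complex.ext
    · simp only [Complex.real_smul, Complex.mul_re, Complex.ofReal_re, Complex.ofReal_im,
        zero_mul, sub_zero]
      field_simp
    · simp only [Complex.real_smul, Complex.mul_im, Complex.ofReal_re, Complex.ofReal_im,
        zero_mul, add_zero]
      field_simp
      linear_combination h'

/-- From any point strictly outside a strictly convex polygon (in general
position with respect to its vertices) there are exactly two tangent lines to the polygon. -/
theorem two_tangent_lines (n : ℕ) [NeZero n] (hn : 3 ≤ n) (V : ZMod n → ℂ) (p : ℂ)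
    (hconv : IsConvexPolygon V)
    (hout : p ∉ convexHull ℝ (Set.range V))
    (hgen : ∀ i j : ZMod n, i ≠ j → ¬Collinear ℝ ({p, V i, V j} : Set ℂ)) :
    Set.ncard {i : ZMod n | IsTangentVertex V p i} = 2 := by
  -- separate p from the hull
  obtain ⟨f, u, hfu, hup⟩ := geometric_hahn_banach_closed_point
    (convex_convexHull ℝ (Set.range V))
    (((Set.finite_range V).isCompact_convexHull ℝ).isClosed) hout
  set m : ℂ := ⟨f 1, -f Complex.I⟩ with hm
  have hf : ∀ z : ℂ, f z = (m * z).re := by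
    intro z
    have h1 : f z = z.re * f 1 + z.im * f Complex.I := by
      have hz : z = z.re • (1 : ℂ) + z.im • Complex.I := by
        apply Complex.ext <;> simp
      calc f z = f (z.re • (1 : ℂ) + z.im • Complex.I) := by rw [← hz]
        _ = z.re * f 1 + z.im * f Complex.I := by
            rw [map_add, map_smul, map_smul]; simp
    rw [h1, hm, Complex.mul_re]
    simp
    ring
  set U : ZMod n → ℂ := fun j => m * (V j - p) with hU
  have hUre : ∀ j, (U j).re < 0 := by
    intro j
    have h1 : f (V j) < u := hfu (V j) (subset_convexHull ℝ _ (Set.mem_range_self j))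
    have h2 : f (V j) - f p < 0 := by linarith
    rw [hf (V j), hf p] at h2
    have heq : (U j).re = (m * V j).re - (m * p).re := by
      rw [hU]; simp only
      rw [mul_sub, Complex.sub_re]
    rw [heq]; linarith
  have hmsq : 0 < m.re ^ 2 + m.im ^ 2 := by
    have hm0 : m ≠ 0 := by
      intro h0
      have h1 : f (V 0) < f p :=
        lt_trans (hfu _ (subset_convexHull ℝ _ (Set.mem_range_self 0))) hup
      rw [hf (V 0), hf p, h0] at h1
      simp at h1
    have := Complex.normSq_pos.mpr hm0
    simpa [Complex.normSq_apply, pow_two] using this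
  have hsgnp : ∀ x : ℝ, 0 < (m.re ^ 2 + m.im ^ 2) * x ↔ 0 < x := by
    intro x
    constructor
    · intro h; nlinarith
    · intro h; exact mul_pos hmsq h
  have hsgnn : ∀ x : ℝ, (m.re ^ 2 + m.im ^ 2) * x < 0 ↔ x < 0 := by
    intro x
    constructor
    · intro h; nlinarith
    · intro h; exact mul_neg_of_pos_of_neg hmsq h
  have hconvU : IsConvexPolygon U := by
    intro i j hj1 hj2
    have heq1 : U (i + 1) - U i = m * (V (i + 1) - V i) := by rw [hU]; ring
    have heq2 : U j - U i = m * (V j - V i) := by rw [hU]; ring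
    rw [heq1, heq2, planeDet_mul]
    exact mul_pos hmsq (hconv i j hj1 hj2)
  have hneU : ∀ i j : ZMod n, i ≠ j → planeDet (U i) (U j) ≠ 0 := by
    intro i j hij
    rw [hU]
    simp only
    rw [planeDet_mul]
    intro h
    have hd0 : planeDet (V i - p) (V j - p) = 0 := by
      rcases mul_eq_zero.mp h with h' | h'
      · nlinarith
      · exact h'
    apply hgen i j hij
    have hvp : V i - p ≠ 0 := by
      intro h'
      have h2 : (U i).re < 0 := hUre i
      rw [hU] at h2; simp only at h2
      rw [h', mul_zero] at h2
      simp at h2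
    obtain ⟨r, hr⟩ := exists_real_smul hvp hd0
    rw [collinear_iff_of_mem (Set.mem_insert p _)]
    refine ⟨V i - p, ?_⟩
    intro q hq
    rcases hq with rfl | hq
    · exact ⟨0, by simp⟩
    rcases hq with rfl | hq
    · refine ⟨1, ?_⟩; simp only [one_smul, vadd_eq_add]; ring
    rw [Set.mem_singleton_iff] at hq
    subst hq
    refine ⟨r, ?_⟩
    simp only [vadd_eq_add]
    rw [← hr]; ring
  have hTVeq : ∀ i : ZMod n, IsTangentVertex V p i ↔ IsTangentVertex U 0 i := by
    intro i
    unfold IsTangentVertex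
    have e1 : U i - 0 = m * (V i - p) := by rw [hU]; ring
    have e2 : U (i - 1) - 0 = m * (V (i - 1) - p) := by rw [hU]; ring
    have e3 : U (i + 1) - 0 = m * (V (i + 1) - p) := by rw [hU]; ring
    rw [e1, e2, e3, planeDet_mul, planeDet_mul, hsgnp, hsgnp, hsgnn, hsgnn]
  have hset : {i : ZMod n | IsTangentVertex V p i} = {i : ZMod n | IsTangentVertex U 0 i} := by
    ext i; exact hTVeq i
  rw [hset]
  exact two_tangent_lines_aux n hn U hUre hconvU hneU
end
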